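/- Let r ≥ 2 be even and let A be an odd-colorable cubical complex r-matrix of order n with odd-coloring φ. If λ is an eigenvalue of A with eigenvector x, then -λ is an eigenvalue of A with eigenvector y given by y_k = e^{2πi φ(k)/r} x_k. Hence the spectrum of A is geosymmetric. -/

import Mathlib

open Finset Complex

/-- `λ` is an eigenvalue of the cubical `r`-matrix `A` with eigenvector `x`:
`λ x_k^{r-1} = ∑_{i₂,…,i_r} a_{k,i₂,…,i_r} x_{i₂} ⋯ x_{i_r}` for all `k`. -/
def IsEigenpair {r n : ℕ} (hr : 0 < r) (A : (Fin r → Fin n) → ℂ)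
    (lam : ℂ) (x : Fin n → ℂ) : Prop :=
  x ≠ 0 ∧ ∀ k : Fin n, lam * x k ^ (r - 1) =
    ∑ i : Fin r → Fin n, if i ⟨0, hr⟩ = k then
      A i * ∏ j ∈ Finset.univ.erase (⟨0, hr⟩ : Fin r), x (i j) else 0

/-- Let `r ≥ 2` be even and `A` an odd-colorable cubical complex `r`-matrix with
odd-coloring `φ`.  If `λ` is an eigenvalue of `A` with eigenvector `x`, then `-λ` is an
eigenvalue of `A` with eigenvector `y`, `y_k = e^{2πi φ(k)/r} x_k`.  Hence the spectrum
of `A` is geosymmetric. -/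
theorem oddColorable_spectrum_geosymmetric (r n : ℕ) (hr : 0 < r) (hr2 : 2 ≤ r)
    (hre : Even r) (A : (Fin r → Fin n) → ℂ) (φ : Fin n → ZMod r)
    (hφ : ∀ i : Fin r → Fin n, A i ≠ 0 →
      ∑ j : Fin r, φ (i j) = ((r / 2 : ℕ) : ZMod r))
    (lam : ℂ) (x : Fin n → ℂ) (h : IsEigenpair hr A lam x) :
    IsEigenpair hr A (-lam)
      (fun k => Complex.exp (2 * Real.pi * Complex.I * ((φ k).val : ℂ) / r) * x k) := by
  haveI : NeZero r := ⟨by omega⟩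
  set ω : ℂ := Complex.exp (2 * Real.pi * Complex.I / r) with hω
  have hrc0 : (r : ℂ) ≠ 0 := Nat.cast_ne_zero.mpr (by omega)
  have hωne : ω ≠ 0 := Complex.exp_ne_zero _
  have hωr : ω ^ r = 1 := by
    rw [hω, ← Complex.exp_nat_mul,
      show (r : ℂ) * (2 * Real.pi * Complex.I / r) = 2 * Real.pi * Complex.I by
        field_simp]
    exact Complex.exp_two_pi_mul_I
  have hmod : ∀ m : ℕ, ω ^ m = ω ^ (m % r) := by
    intro m
    conv_lhs => rw [← Nat.div_add_mod m r]
    rw [pow_add, pow_mul, hωr, one_pow, one_mul]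
  have hval : ∀ a b : ZMod r, ω ^ (a + b).val = ω ^ a.val * ω ^ b.val := by
    intro a b
    rw [← pow_add, ZMod.val_add, ← hmod]
  have hexp : ∀ k : Fin n,
      Complex.exp (2 * Real.pi * Complex.I * ((φ k).val : ℂ) / r) = ω ^ (φ k).val := by
    intro k
    rw [hω, ← Complex.exp_nat_mul]
    congr 1
    field_simp
  have hhalf : ω ^ (((r / 2 : ℕ) : ZMod r)).val = -1 := by
    have h1 : (((r / 2 : ℕ) : ZMod r)).val = r / 2 := by
      rw [ZMod.val_natCast]
      exact Nat.mod_eq_of_lt (by omega)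
    obtain ⟨m, hm⟩ := hre
    have h2 : r / 2 = m := by omega
    have hm0 : (m : ℂ) ≠ 0 := Nat.cast_ne_zero.mpr (by omega)
    rw [h1, h2, hω, ← Complex.exp_nat_mul,
      show (m : ℂ) * (2 * Real.pi * Complex.I / r) = Real.pi * Complex.I by
        have hrc : (r : ℂ) = 2 * m := by rw [hm]; push_cast; ring
        rw [hrc]
        field_simp]
    exact Complex.exp_pi_mul_I
  have hsum : ∀ (s : Finset (Fin r)) (g : Fin r → ZMod r),
      ω ^ (∑ j ∈ s, g j).val = ∏ j ∈ s, ω ^ (g j).val := by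
    intro s g
    induction s using Finset.induction with
    | empty => simp
    | insert _ _ hj ih => rw [Finset.sum_insert hj, Finset.prod_insert hj, hval, ih]
  obtain ⟨hx, hx2⟩ := h
  constructor
  · intro hy
    apply hx
    funext k
    have hk := congrFun hy k
    simp only [Pi.zero_apply] at hk ⊢
    rcases mul_eq_zero.mp hk with h' | h'
    · exact absurd h' (Complex.exp_ne_zero _)
    · exact h'
  · intro k
    simp only [hexp]
    set u := (φ k).val with hu
    apply mul_left_cancel₀ (pow_ne_zero u hωne)
    have lhs_eq : ω ^ u * (-lam * (ω ^ u * x k) ^ (r - 1)) = -(lam * x k ^ (r - 1)) := by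
      rw [mul_pow, ← mul_assoc, ← mul_assoc, mul_comm (ω ^ u) (-lam), mul_assoc (-lam),
        ← pow_succ' (ω ^ u) (r - 1)]
      have : r - 1 + 1 = r := by omega
      rw [this, ← pow_mul, mul_comm u r, pow_mul, hωr, one_pow]
      ring
    rw [lhs_eq, Finset.mul_sum]
    have rhs_eq : ∀ i : Fin r → Fin n,
        (ω ^ u * if i ⟨0, hr⟩ = k then
          A i * ∏ j ∈ Finset.univ.erase (⟨0, hr⟩ : Fin r), ω ^ (φ (i j)).val * x (i j)
          else 0)
        = (if i ⟨0, hr⟩ = k then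
            -(A i * ∏ j ∈ Finset.univ.erase (⟨0, hr⟩ : Fin r), x (i j)) else 0) := by
      intro i
      by_cases hik : i ⟨0, hr⟩ = k
      · simp only [hik, if_true]
        by_cases hA : A i = 0
        · simp [hA]
        · have hφi := hφ i hA
          rw [Finset.prod_mul_distrib]
          have hωprod : ω ^ u * ∏ j ∈ Finset.univ.erase (⟨0, hr⟩ : Fin r), ω ^ (φ (i j)).val
              = -1 := by
            have := Finset.mul_prod_erase Finset.univ (fun j => ω ^ (φ (i j)).val)
              (Finset.mem_univ (⟨0, hr⟩ : Fin r))
            rw [hu, ← hik, this, ← hsum, hφi, hhalf]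
          calc ω ^ u * (A i * ((∏ j ∈ Finset.univ.erase (⟨0, hr⟩ : Fin r), ω ^ (φ (i j)).val) *
                ∏ j ∈ Finset.univ.erase (⟨0, hr⟩ : Fin r), x (i j)))
              = (ω ^ u * ∏ j ∈ Finset.univ.erase (⟨0, hr⟩ : Fin r), ω ^ (φ (i j)).val) *
                (A i * ∏ j ∈ Finset.univ.erase (⟨0, hr⟩ : Fin r), x (i j)) := by ring
            _ = _ := by rw [hωprod]; ring
      · rw [if_neg hik, if_neg hik, mul_zero]
    rw [Finset.sum_congr rfl (fun i _ => rhs_eq i)]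
    have hneg : ∀ i : Fin r → Fin n,
        (if i ⟨0, hr⟩ = k then
          -(A i * ∏ j ∈ Finset.univ.erase (⟨0, hr⟩ : Fin r), x (i j)) else 0)
        = -(if i ⟨0, hr⟩ = k then
            A i * ∏ j ∈ Finset.univ.erase (⟨0, hr⟩ : Fin r), x (i j) else 0) := by
      intro i; split <;> simp
    rw [Finset.sum_congr rfl (fun i _ => hneg i), Finset.sum_neg_distrib, ← hx2 k]
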